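/- For 0 ≤ r < 1, the double integral (1/(2π)²)∫₀^{2π}∫₀^{2π} |re^{iθ}-1|²/|2 - re^{iθ} - re^{iφ}|² dφ dθ equals (2-√(1-r²))/4, which tends to 1/2 as r → 1⁻. Consequently (z-1)/(2-z-w) belongs to the Hardy space H²(𝕋²). -/

import Mathlib

open Real Filter

section helpers
open Complex Metric

lemma cint_out {w : ℂ} {r : ℝ} (h0 : 0 ≤ r) (hw : r < ‖w‖) :
    (∮ z in C(0, r), (z - w)⁻¹) = 0 := by
  apply circleIntegral_eq_zero_of_differentiable_on_off_countable h0 Set.countable_empty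
  · apply ContinuousOn.inv₀ (by fun_prop)
    intro z hz
    have : ‖z‖ ≤ r := by simpa using mem_closedBall_zero_iff.1 hz
    exact sub_ne_zero.2 (fun h => by simp [h] at this; linarith)
  · intro z hz
    have : ‖z‖ < r := by
      exact mem_ball_zero_iff.1 hz.1
    exact (differentiableAt_id.sub_const w).inv
      (sub_ne_zero.2 (fun h => by rw [show z = w from h] at this; linarith))

lemma cint_in {w : ℂ} {r : ℝ} (hw : ‖w‖ < r) :
    (∮ z in C(0, r), (z - w)⁻¹) = 2 * π * Complex.I :=
  circleIntegral.integral_sub_inv_of_mem_ball (by simpa using hw)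

lemma abs_sq_eq (c s θ : ℝ) :
    ‖((c:ℂ) - s * Complex.exp (θ * Complex.I))‖ ^ 2
      = c ^ 2 - 2 * c * s * Real.cos θ + s ^ 2 := by
  rw [Complex.sq_norm, Complex.normSq_apply]
  simp [Complex.exp_mul_I, Complex.cos_ofReal_re, Complex.sin_ofReal_re]
  nlinarith [Real.sin_sq_add_cos_sq θ]

lemma pf_identity (z a ca D : ℂ) (r : ℝ) (hz0 : z ≠ 0) (hza : a - z ≠ 0)
    (hca : ca ≠ 0) (hcaz : ca * z - (r:ℂ)^2 ≠ 0) (hD0 : a * ca - (r:ℂ)^2 ≠ 0)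
    (hD : D = a * ca - (r:ℂ)^2) :
    (z * Complex.I) * ((Complex.I * D)⁻¹ * ((z - (r:ℂ)^2/ca)⁻¹ - (z - a)⁻¹)) =
      ((a - z) * (ca - (r:ℂ)^2 / z))⁻¹ := by
  subst hD
  have h1 : z - (r:ℂ)^2/ca ≠ 0 := by
    intro h
    apply hcaz
    have := congrArg (· * ca) h
    simp only [sub_mul, zero_mul] at this
    rw [div_mul_cancel₀ _ hca] at this
    linear_combination this
  have h2 : ca - (r:ℂ)^2 / z ≠ 0 := by
    intro h
    apply hcaz
    have := congrArg (· * z) h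
    simp only [sub_mul, zero_mul] at this
    rw [div_mul_cancel₀ _ hz0] at this
    linear_combination this
  have h3 : z - a ≠ 0 := fun h => hza (by linear_combination -h)
  have h4 : z * ca - (r:ℂ)^2 ≠ 0 := by rw [mul_comm]; exact hcaz
  field_simp
  ring

lemma lemA_complex (a : ℂ) (r : ℝ) (h0 : 0 < r) (hr : r < ‖a‖) :
    ∫ θ in (0:ℝ)..(2*π), ((Complex.normSq (a - r * Complex.exp (θ * Complex.I)) : ℝ) : ℂ)⁻¹
      = 2 * π / (((‖a‖) ^ 2 : ℝ) - r ^ 2) := by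
  have ha : a ≠ 0 := by
    intro h; rw [h] at hr; simp at hr; linarith
  have hca : (starRingEnd ℂ) a ≠ 0 := by simpa using ha
  set D : ℝ := (‖a‖) ^ 2 - r ^ 2 with hDdef
  have hD : 0 < D := by nlinarith [norm_nonneg a]
  have hDC : ((D : ℂ)) = a * (starRingEnd ℂ) a - (r:ℂ)^2 := by
    rw [Complex.mul_conj]
    push_cast [hDdef, Complex.sq_norm]
    ring
  have hD0 : a * (starRingEnd ℂ) a - (r:ℂ)^2 ≠ 0 := by
    rw [← hDC]; exact_mod_cast Complex.ofReal_ne_zero.2 hD.ne'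
  set w₁ : ℂ := (r:ℂ)^2 / (starRingEnd ℂ) a with hw₁
  have habsw₁ : ‖w₁‖ < r := by
    rw [hw₁, norm_div, norm_pow, Complex.norm_real, Real.norm_eq_abs, Complex.norm_conj,
      abs_of_pos h0, div_lt_iff₀ (by linarith)]
    nlinarith
  have step1 : (∫ θ in (0:ℝ)..(2*π),
      ((Complex.normSq (a - r * Complex.exp (θ * Complex.I)) : ℝ) : ℂ)⁻¹)
      = ∮ z in C(0, r), (Complex.I * (D:ℂ))⁻¹ * ((z - w₁)⁻¹ - (z - a)⁻¹) := by
    rw [circleIntegral]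
    apply intervalIntegral.integral_congr
    intro θ _
    simp only [deriv_circleMap, circleMap, Complex.ofReal_zero, zero_add, smul_eq_mul]
    set z := (r:ℂ) * Complex.exp (θ * Complex.I) with hz
    have habsz : ‖z‖ = r := by
      rw [hz, norm_mul, Complex.norm_real, Real.norm_eq_abs, Complex.norm_exp_ofReal_mul_I,
        abs_of_pos h0, mul_one]
    have hz0 : z ≠ 0 := by
      intro h; rw [h] at habsz; simp at habsz; linarith
    have hzz : z * (starRingEnd ℂ) z = (r:ℂ)^2 := by
      rw [Complex.mul_conj]
      norm_cast
      rw [← Complex.sq_norm z, habsz]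
    have hconjz : (starRingEnd ℂ) z = (r:ℂ)^2 / z := by
      rw [eq_div_iff hz0, mul_comm]
      exact hzz
    have hns : ((Complex.normSq (a - z) : ℝ) : ℂ)
        = (a - z) * ((starRingEnd ℂ) a - (r:ℂ)^2 / z) := by
      rw [← Complex.mul_conj, map_sub, hconjz]
    have hza : a - z ≠ 0 := by
      intro h
      have h2 : a = z := by linear_combination h
      rw [← h2] at habsz; linarith
    have hcaz : (starRingEnd ℂ) a * z - (r:ℂ)^2 ≠ 0 := by
      intro h
      have h2 : z = w₁ := by
        rw [hw₁, eq_div_iff hca]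
        linear_combination h
      rw [h2] at habsz; linarith
    rw [hns, ← pf_identity z a ((starRingEnd ℂ) a) (D:ℂ) r hz0 hza hca hcaz hD0 hDC, hw₁]
  rw [step1]
  have hi1 : CircleIntegrable (fun z => (z - w₁)⁻¹) 0 r :=
    (circleIntegrable_sub_inv_iff).2 (Or.inr (by
      simp [abs_of_pos h0]
      intro h; rw [h] at habsw₁; simp at habsw₁))
  have hi2 : CircleIntegrable (fun z => (z - a)⁻¹) 0 r :=
    (circleIntegrable_sub_inv_iff).2 (Or.inr (by
      simp [abs_of_pos h0]
      intro h; rw [h] at hr; simp at hr))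
  have hsub := circleIntegral.integral_sub hi1 hi2
  have hsmul := circleIntegral.integral_smul (𝕜 := ℂ)
    ((Complex.I * (D:ℂ))⁻¹) (fun z => (z - w₁)⁻¹ - (z - a)⁻¹) 0 r
  simp only [smul_eq_mul] at hsmul
  rw [hsmul, hsub, cint_in habsw₁, cint_out h0.le hr]
  have hDC0 : (D:ℂ) ≠ 0 := Complex.ofReal_ne_zero.2 hD.ne'
  rw [sub_zero, mul_inv, Complex.inv_I]
  rw [hDdef] at hDC0
  push_cast [hDdef]
  push_cast at hDC0
  field_simp
  linear_combination (-1:ℂ) * Complex.I_mul_I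

lemma lemA (a : ℂ) (r : ℝ) (h0 : 0 < r) (hr : r < ‖a‖) :
    ∫ θ in (0:ℝ)..(2*π), ((‖(a - r * Complex.exp (θ * Complex.I))‖) ^ 2)⁻¹
      = 2 * π / ((‖a‖) ^ 2 - r ^ 2) := by
  have h := lemA_complex a r h0 hr
  have h2 : ∫ θ in (0:ℝ)..(2*π),
      ((((‖(a - r * Complex.exp (θ * Complex.I))‖) ^ 2)⁻¹ : ℝ) : ℂ)
      = ((2 * π / ((‖a‖) ^ 2 - r ^ 2) : ℝ) : ℂ) := by
    rw [show ((2 * π / ((‖a‖) ^ 2 - r ^ 2) : ℝ) : ℂ)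
        = 2 * (π:ℂ) / (((‖a‖ ^ 2 : ℝ)) - (r:ℂ) ^ 2) by push_cast; ring, ← h]
    apply intervalIntegral.integral_congr
    intro θ _
    push_cast [Complex.sq_norm]
    norm_num
  rw [intervalIntegral.integral_ofReal] at h2
  exact_mod_cast h2

lemma lemB (r : ℝ) (h0 : 0 < r) (h1 : r < 1) :
    ∫ θ in (0:ℝ)..(2*π), (1 - r * Real.cos θ)⁻¹ = 2 * π / Real.sqrt (1 - r ^ 2) := by
  set t := Real.sqrt (1 - r ^ 2) with htdef
  have hr2 : (0:ℝ) < 1 - r ^ 2 := by nlinarith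
  have ht2 : t ^ 2 = 1 - r ^ 2 := Real.sq_sqrt hr2.le
  have ht0 : 0 < t := Real.sqrt_pos.2 hr2
  have ht1 : t < 1 := by nlinarith
  set s := (1 - t) / r with hsdef
  have hs0 : 0 < s := div_pos (by linarith) h0
  have hs1 : s < 1 := by
    rw [hsdef, div_lt_one h0]
    nlinarith
  have hkey : r * (1 + s ^ 2) = 2 * s := by
    rw [hsdef]
    field_simp
    nlinarith
  have hA := lemA 1 s hs0 (by simpa using hs1)
  simp only [norm_one, one_pow] at hA
  have hcong : ∫ θ in (0:ℝ)..(2*π), (1 - r * Real.cos θ)⁻¹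
      = ∫ θ in (0:ℝ)..(2*π),
        (2 * s / r) * ((‖((1:ℂ) - s * Complex.exp (θ * Complex.I))‖) ^ 2)⁻¹ := by
    apply intervalIntegral.integral_congr
    intro θ _
    beta_reduce
    have habs := abs_sq_eq 1 s θ
    rw [Complex.ofReal_one] at habs
    rw [habs]
    have hd1 : (0:ℝ) < 1 - r * Real.cos θ := by
      nlinarith [Real.neg_one_le_cos θ, Real.cos_le_one θ]
    have hd2 : (0:ℝ) < 1 ^ 2 - 2 * 1 * s * Real.cos θ + s ^ 2 := by
      nlinarith [Real.neg_one_le_cos θ, Real.cos_le_one θ]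
    rw [← one_div, ← one_div, div_mul_div_comm, div_eq_div_iff hd1.ne' (mul_ne_zero h0.ne' hd2.ne')]
    linear_combination hkey
  rw [hcong, intervalIntegral.integral_const_mul, hA]
  have hs2 : 1 - s ^ 2 ≠ 0 := by nlinarith
  rw [hsdef] at hs2 ⊢
  rw [div_mul_div_comm, div_eq_div_iff (mul_ne_zero h0.ne' hs2) ht0.ne']
  field_simp
  ring_nf
  linear_combination (-1:ℝ) * ht2

lemma main_formula (r : ℝ) (h0 : 0 ≤ r) (h1 : r < 1) :
    (1 / (2 * π) ^ 2) * ∫ θ in (0:ℝ)..(2 * π), ∫ φ in (0:ℝ)..(2 * π),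
        ‖(r * Complex.exp (θ * Complex.I) - 1)‖ ^ 2 /
          ‖(2 - r * Complex.exp (θ * Complex.I)
            - r * Complex.exp (φ * Complex.I))‖ ^ 2 =
      (2 - Real.sqrt (1 - r ^ 2)) / 4 := by
  rcases eq_or_lt_of_le h0 with h0 | h0
  · -- r = 0
    subst h0
    have hc : ∀ θ φ : ℝ, ‖((0:ℝ) * Complex.exp (θ * Complex.I) - 1)‖ ^ 2 /
        ‖(2 - (0:ℝ) * Complex.exp (θ * Complex.I)
          - (0:ℝ) * Complex.exp (φ * Complex.I))‖ ^ 2 = (1:ℝ)/4 := by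
      intro θ φ
      simp only [Complex.ofReal_zero, zero_mul, zero_sub, sub_zero]
      rw [show ‖(-1:ℂ)‖ = 1 by simp, show ‖(2:ℂ)‖ = 2 by simp]
      norm_num
    calc (1 / (2 * π) ^ 2) * ∫ θ in (0:ℝ)..(2 * π), ∫ φ in (0:ℝ)..(2 * π),
          ‖((0:ℝ) * Complex.exp (θ * Complex.I) - 1)‖ ^ 2 /
            ‖(2 - (0:ℝ) * Complex.exp (θ * Complex.I)
              - (0:ℝ) * Complex.exp (φ * Complex.I))‖ ^ 2
        = (1 / (2 * π) ^ 2) * ∫ θ in (0:ℝ)..(2 * π), ∫ φ in (0:ℝ)..(2 * π), (1:ℝ)/4 := by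
          congr 1
          apply intervalIntegral.integral_congr; intro θ _; beta_reduce
          apply intervalIntegral.integral_congr; intro φ _; beta_reduce
          exact hc θ φ
      _ = (2 - Real.sqrt (1 - (0:ℝ) ^ 2)) / 4 := by
          rw [intervalIntegral.integral_const, intervalIntegral.integral_const]
          have hπ := Real.pi_pos
          simp only [smul_eq_mul]
          rw [show (1:ℝ) - 0 ^ 2 = 1 by ring, Real.sqrt_one]
          field_simp
          ring
  -- 0 < r
  have hπ := Real.pi_pos
  set t := Real.sqrt (1 - r ^ 2) with htdef
  have hr2 : (0:ℝ) < 1 - r ^ 2 := by nlinarith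
  have ht2 : t ^ 2 = 1 - r ^ 2 := Real.sq_sqrt hr2.le
  have ht0 : 0 < t := Real.sqrt_pos.2 hr2
  have hNthm : ∀ θ : ℝ, ‖((r:ℝ) * Complex.exp (θ * Complex.I) - 1)‖ ^ 2
      = 1 - 2 * r * Real.cos θ + r ^ 2 := by
    intro θ
    rw [norm_sub_rev]
    have := abs_sq_eq 1 r θ
    rw [Complex.ofReal_one] at this
    rw [this]; ring
  have inner_eq : ∀ θ : ℝ,
      (∫ φ in (0:ℝ)..(2 * π),
        ‖((r:ℝ) * Complex.exp (θ * Complex.I) - 1)‖ ^ 2 /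
          ‖(2 - (r:ℝ) * Complex.exp (θ * Complex.I)
            - (r:ℝ) * Complex.exp (φ * Complex.I))‖ ^ 2)
      = π - (π * (1 - r ^ 2) / 2) * (1 - r * Real.cos θ)⁻¹ := by
    intro θ
    set a : ℂ := 2 - (r:ℝ) * Complex.exp (θ * Complex.I) with hadef
    have habs2 : ‖a‖ ^ 2 = 4 - 4 * r * Real.cos θ + r ^ 2 := by
      have := abs_sq_eq 2 r θ
      rw [show ((2:ℝ):ℂ) = (2:ℂ) by norm_num] at this
      rw [hadef, this]; ring
    have hra : r < ‖a‖ := by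
      have h2 : ‖a‖ ^ 2 - r ^ 2 = 4 * (1 - r * Real.cos θ) := by rw [habs2]; ring
      have hd : (0:ℝ) < 1 - r * Real.cos θ := by
        nlinarith [Real.neg_one_le_cos θ, Real.cos_le_one θ]
      nlinarith [norm_nonneg a]
    have hd : (0:ℝ) < 1 - r * Real.cos θ := by
      nlinarith [Real.neg_one_le_cos θ, Real.cos_le_one θ]
    rw [show (∫ φ in (0:ℝ)..(2 * π),
        ‖((r:ℝ) * Complex.exp (θ * Complex.I) - 1)‖ ^ 2 /
          ‖(a - (r:ℝ) * Complex.exp (φ * Complex.I))‖ ^ 2)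
      = ∫ φ in (0:ℝ)..(2 * π),
        ‖((r:ℝ) * Complex.exp (θ * Complex.I) - 1)‖ ^ 2 *
          (‖(a - (r:ℝ) * Complex.exp (φ * Complex.I))‖ ^ 2)⁻¹ by
        apply intervalIntegral.integral_congr; intro φ _; beta_reduce; rw [div_eq_mul_inv]]
    rw [intervalIntegral.integral_const_mul, lemA a r h0 hra, hNthm θ, habs2]
    rw [show (4:ℝ) - 4 * r * Real.cos θ + r ^ 2 - r ^ 2 = 4 * (1 - r * Real.cos θ) by ring]
    field_simp
    ring
  rw [show (∫ θ in (0:ℝ)..(2 * π), ∫ φ in (0:ℝ)..(2 * π),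
      ‖(r * Complex.exp (θ * Complex.I) - 1)‖ ^ 2 /
        ‖(2 - r * Complex.exp (θ * Complex.I)
          - r * Complex.exp (φ * Complex.I))‖ ^ 2)
    = ∫ θ in (0:ℝ)..(2 * π), (π - (π * (1 - r ^ 2) / 2) * (1 - r * Real.cos θ)⁻¹) by
      apply intervalIntegral.integral_congr; intro θ _; beta_reduce; exact inner_eq θ]
  have hint : IntervalIntegrable (fun θ : ℝ => (π * (1 - r ^ 2) / 2) * (1 - r * Real.cos θ)⁻¹)
      MeasureTheory.volume 0 (2 * π) := by
    apply Continuous.intervalIntegrable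
    apply continuous_const.mul
    apply Continuous.inv₀ (by fun_prop)
    intro θ
    have : (0:ℝ) < 1 - r * Real.cos θ := by
      nlinarith [Real.neg_one_le_cos θ, Real.cos_le_one θ]
    exact this.ne'
  rw [intervalIntegral.integral_sub intervalIntegrable_const hint,
    intervalIntegral.integral_const, intervalIntegral.integral_const_mul, lemB r h0 h1,
    ← htdef]
  rw [smul_eq_mul]
  have hc : (2 * π) ^ 2 ≠ 0 := by positivity
  field_simp
  ring_nf
  linear_combination (4*π) * ht2

end helpers

theorem radial_means_z_sub_one_div_two_sub_z_sub_w :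
    (∀ r : ℝ, 0 ≤ r → r < 1 →
      (1 / (2 * π) ^ 2) * ∫ θ in (0:ℝ)..(2 * π), ∫ φ in (0:ℝ)..(2 * π),
          ‖(r * Complex.exp (θ * Complex.I) - 1 : ℂ)‖ ^ 2 /
            ‖(2 - r * Complex.exp (θ * Complex.I)
              - r * Complex.exp (φ * Complex.I) : ℂ)‖ ^ 2 =
        (2 - Real.sqrt (1 - r ^ 2)) / 4) ∧
    Tendsto (fun r : ℝ =>
      (1 / (2 * π) ^ 2) * ∫ θ in (0:ℝ)..(2 * π), ∫ φ in (0:ℝ)..(2 * π),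
          ‖(r * Complex.exp (θ * Complex.I) - 1 : ℂ)‖ ^ 2 /
            ‖(2 - r * Complex.exp (θ * Complex.I)
              - r * Complex.exp (φ * Complex.I) : ℂ)‖ ^ 2)
      (nhdsWithin 1 (Set.Ico 0 1)) (nhds (1 / 2)) ∧
    -- boundedness of the radial L² means: (z-1)/(2-z-w) belongs to H²(𝕋²)
    ∃ C : ℝ, ∀ r : ℝ, 0 ≤ r → r < 1 →
      (1 / (2 * π) ^ 2) * ∫ θ in (0:ℝ)..(2 * π), ∫ φ in (0:ℝ)..(2 * π),
          ‖(r * Complex.exp (θ * Complex.I) - 1 : ℂ)‖ ^ 2 /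
            ‖(2 - r * Complex.exp (θ * Complex.I)
              - r * Complex.exp (φ * Complex.I) : ℂ)‖ ^ 2 ≤ C := by
  refine ⟨fun r h0 h1 => main_formula r h0 h1, ?_, ⟨1/2, fun r h0 h1 => ?_⟩⟩
  · have heq : (fun r : ℝ => (2 - Real.sqrt (1 - r ^ 2)) / 4) =ᶠ[nhdsWithin 1 (Set.Ico 0 1)]
        (fun r : ℝ =>
          (1 / (2 * π) ^ 2) * ∫ θ in (0:ℝ)..(2 * π), ∫ φ in (0:ℝ)..(2 * π),
            ‖(r * Complex.exp (θ * Complex.I) - 1)‖ ^ 2 /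
              ‖(2 - r * Complex.exp (θ * Complex.I)
                - r * Complex.exp (φ * Complex.I))‖ ^ 2) := by
      filter_upwards [self_mem_nhdsWithin] with r hr
      exact (main_formula r hr.1 hr.2).symm
    apply Tendsto.congr' heq
    have hcont : Continuous (fun r : ℝ => (2 - Real.sqrt (1 - r ^ 2)) / 4) := by
      apply Continuous.div_const
      exact continuous_const.sub (Real.continuous_sqrt.comp (by fun_prop))
    have := (hcont.tendsto 1).mono_left (nhdsWithin_le_nhds (s := Set.Ico 0 1))
    convert this using 2
    norm_num
  · rw [main_formula r h0 h1]
    have := Real.sqrt_nonneg (1 - r ^ 2)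
    linarith
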